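/- Let G be a connected split graph with at least 2 vertices, i.e., a connected finite simple graph whose vertex set can be partitioned into a clique C and an independent set I, and let v be a vertex of G. Then v is an F-branch leaf of some DFS ordering of G if and only if v is not a cut vertex of G. -/
import Mathlib


open SimpleGraph

variable {V : Type*}

/-- A generic search (GS) ordering: every vertex other than the first has an
earlier neighbor. -/
def IsGSOrdering [Fintype V] (G : SimpleGraph V) (σ : Fin (Fintype.card V) ≃ V) : Prop :=
  ∀ w : V, (σ.symm w).val ≠ 0 → ∃ u : V, σ.symm u < σ.symm w ∧ G.Adj u w

/-- DFS ordering (Corneil–Krueger four-point characterization). -/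
def IsDFSOrdering [Fintype V] (G : SimpleGraph V) (σ : Fin (Fintype.card V) ≃ V) : Prop :=
  IsGSOrdering G σ ∧ ∀ a b c : V, σ.symm a < σ.symm b → σ.symm b < σ.symm c →
    G.Adj a c → ¬ G.Adj a b →
      ∃ d : V, σ.symm a < σ.symm d ∧ σ.symm d < σ.symm b ∧ G.Adj d b

/-- BFS ordering (Corneil–Krueger four-point characterization). -/
def IsBFSOrdering [Fintype V] (G : SimpleGraph V) (σ : Fin (Fintype.card V) ≃ V) : Prop :=
  IsGSOrdering G σ ∧ ∀ a b c : V, σ.symm a < σ.symm b → σ.symm b < σ.symm c →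
    G.Adj a c → ¬ G.Adj a b →
      ∃ d : V, σ.symm d < σ.symm a ∧ G.Adj d b

/-- LDFS ordering (Corneil–Krueger four-point characterization). -/
def IsLDFSOrdering [Fintype V] (G : SimpleGraph V) (σ : Fin (Fintype.card V) ≃ V) : Prop :=
  IsGSOrdering G σ ∧ ∀ a b c : V, σ.symm a < σ.symm b → σ.symm b < σ.symm c →
    G.Adj a c → ¬ G.Adj a b →
      ∃ d : V, σ.symm a < σ.symm d ∧ σ.symm d < σ.symm b ∧ G.Adj d b ∧ ¬ G.Adj d c

/-- MNS ordering (Corneil–Krueger four-point characterization). -/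
def IsMNSOrdering [Fintype V] (G : SimpleGraph V) (σ : Fin (Fintype.card V) ≃ V) : Prop :=
  IsGSOrdering G σ ∧ ∀ a b c : V, σ.symm a < σ.symm b → σ.symm b < σ.symm c →
    G.Adj a c → ¬ G.Adj a b →
      ∃ d : V, σ.symm d < σ.symm b ∧ G.Adj d b ∧ ¬ G.Adj d c

/-- MCS ordering: for positions `i < j`, the vertex at position `i` has at least as many
neighbors among the vertices at positions `< i` as the vertex at position `j` has. -/
def IsMCSOrdering [Fintype V] (G : SimpleGraph V) (σ : Fin (Fintype.card V) ≃ V) : Prop :=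
  ∀ i j : Fin (Fintype.card V), i < j →
    Nat.card {k : Fin (Fintype.card V) // k < i ∧ G.Adj (σ k) (σ j)} ≤
    Nat.card {k : Fin (Fintype.card V) // k < i ∧ G.Adj (σ k) (σ i)}

/-- A perfect elimination ordering: the earlier neighbors of any vertex form a clique. -/
def IsPEO [Fintype V] (G : SimpleGraph V) (σ : Fin (Fintype.card V) ≃ V) : Prop :=
  ∀ u v w : V, σ.symm u < σ.symm w → σ.symm v < σ.symm w → u ≠ v →
    G.Adj u w → G.Adj v w → G.Adj u v

/-- `u` is the F-parent of `v`: `v` is not the first vertex and `u` is the earliest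
neighbor of `v` in the ordering. -/
def FParent [Fintype V] (G : SimpleGraph V) (σ : Fin (Fintype.card V) ≃ V) (u v : V) : Prop :=
  (σ.symm v).val ≠ 0 ∧ G.Adj u v ∧ ∀ w : V, G.Adj w v → σ.symm u ≤ σ.symm w

/-- `u` is the L-parent of `v`: `v` is not the first vertex and `u` is the last
neighbor of `v` occurring before `v` in the ordering. -/
def LParent [Fintype V] (G : SimpleGraph V) (σ : Fin (Fintype.card V) ≃ V) (u v : V) : Prop :=
  (σ.symm v).val ≠ 0 ∧ G.Adj u v ∧ σ.symm u < σ.symm v ∧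
    ∀ w : V, G.Adj w v → σ.symm w < σ.symm v → σ.symm w ≤ σ.symm u

/-- `v` is an F-branch leaf: `v` is not the first vertex and is the F-parent of no vertex. -/
def FBranchLeaf [Fintype V] (G : SimpleGraph V) (σ : Fin (Fintype.card V) ≃ V) (v : V) : Prop :=
  (σ.symm v).val ≠ 0 ∧ ∀ w : V, ¬ FParent G σ v w

/-- `v` is the F-root leaf: `v` is the first vertex and is the F-parent of exactly one vertex. -/
def FRootLeaf [Fintype V] (G : SimpleGraph V) (σ : Fin (Fintype.card V) ≃ V) (v : V) : Prop :=
  (σ.symm v).val = 0 ∧ ∃! w : V, FParent G σ v w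

/-- `v` is an L-branch leaf: `v` is not the first vertex and is the L-parent of no vertex. -/
def LBranchLeaf [Fintype V] (G : SimpleGraph V) (σ : Fin (Fintype.card V) ≃ V) (v : V) : Prop :=
  (σ.symm v).val ≠ 0 ∧ ∀ w : V, ¬ LParent G σ v w

/-- `v` is the L-root leaf: `v` is the first vertex and is the L-parent of exactly one vertex. -/
def LRootLeaf [Fintype V] (G : SimpleGraph V) (σ : Fin (Fintype.card V) ≃ V) (v : V) : Prop :=
  (σ.symm v).val = 0 ∧ ∃! w : V, LParent G σ v w

/-- `v` is an L-leaf: the L-root leaf or an L-branch leaf. -/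
def LLeaf [Fintype V] (G : SimpleGraph V) (σ : Fin (Fintype.card V) ≃ V) (v : V) : Prop :=
  LRootLeaf G σ v ∨ LBranchLeaf G σ v

/-- `v` is the end-vertex (last vertex) of the ordering `σ`. -/
def IsEndVertex [Fintype V] (σ : Fin (Fintype.card V) ≃ V) (v : V) : Prop :=
  (σ.symm v).val = Fintype.card V - 1

/-- `v` is a cut vertex: deleting `v` yields a disconnected graph. -/
def CutVertex (G : SimpleGraph V) (v : V) : Prop :=
  ¬ (G.induce {w : V | w ≠ v}).Connected

/-- A graph is chordal if every cycle of length at least 4 has a chord, i.e. an edge of the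
graph joining two vertices of the cycle which is not an edge of the cycle. -/
def IsChordal (G : SimpleGraph V) : Prop :=
  ∀ ⦃v : V⦄ (w : G.Walk v v), w.IsCycle → 4 ≤ w.length →
    ∃ x y : V, x ∈ w.support ∧ y ∈ w.support ∧ G.Adj x y ∧ s(x, y) ∉ w.edges

private lemma nat_key_lt_of_lt {k a1 b1 a2 b2 : ℕ} (hb1 : b1 < k) (ha : a1 < a2) :
    k * a1 + b1 < k * a2 + b2 := by
  have h1 : k * (a1 + 1) ≤ k * a2 := Nat.mul_le_mul_left k ha
  have h2 : k * (a1 + 1) = k * a1 + k := by ring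
  linarith

private lemma reach_exists_adj {W : Type*} {H : SimpleGraph W} {x y : W}
    (h : H.Reachable x y) (hne : x ≠ y) : ∃ z, H.Adj x z := by
  obtain ⟨w⟩ := h
  cases w with
  | nil => exact absurd rfl hne
  | cons h _ => exact ⟨_, h⟩

private lemma exists_dfs_fbl [Fintype V] (G : SimpleGraph V) (D : Set V)
    (hclique : G.IsClique D)
    (hindep : ∀ a b, a ∉ D → b ∉ D → ¬ G.Adj a b)
    (hJn : ∀ u, u ∉ D → ∃ d ∈ D, G.Adj d u)
    (v : V)
    (hv : v ∉ D ∨ (v ∈ D ∧ (∃ d ∈ D, d ≠ v) ∧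
      ∀ u, u ∉ D → G.Adj v u → ∃ d ∈ D, d ≠ v ∧ G.Adj d u)) :
    ∃ σ : Fin (Fintype.card V) ≃ V, IsDFSOrdering G σ ∧ FBranchLeaf G σ v := by
  classical
  set n := Fintype.card V with hn
  let e : V ≃ Fin n := Fintype.equivFin V
  let dRank : V → ℕ := fun x => if x = v then n else (e x : ℕ)
  have hdRank_le : ∀ x, dRank x ≤ n := by
    intro x
    simp only [dRank]
    split
    · exact le_rfl
    · exact le_of_lt (e x).isLt
  have hdRank_inj : Function.Injective dRank := by
    intro x y h
    simp only [dRank] at h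
    split at h <;> split at h
    · rename_i h1 h2; rw [h1, h2]
    · rename_i h1 h2; exact absurd h.symm (ne_of_lt (e y).isLt)
    · rename_i h1 h2; exact absurd h (ne_of_lt (e x).isLt)
    · exact e.injective (Fin.val_injective h)
  let S : V → Finset V := fun u => Finset.univ.filter (fun d => d ∈ D ∧ G.Adj d u)
  let r : V → ℕ := fun u => (S u).sup dRank
  have hr_le : ∀ u, r u ≤ n := fun u => Finset.sup_le fun d _ => hdRank_le d
  have hSne : ∀ u, u ∉ D → (S u).Nonempty := by
    intro u hu
    obtain ⟨d, hd, hadj⟩ := hJn u hu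
    exact ⟨d, by simp [S, hd, hadj]⟩
  let key : V → ℕ := fun x => if x ∈ D then dRank x else (n + 1) * (n + 2 - r x) + (e x : ℕ)
  have hkeyD : ∀ x ∈ D, key x = dRank x := fun x hx => by simp [key, hx]
  have hkeyD_le : ∀ x ∈ D, key x ≤ n := fun x hx => (hkeyD x hx) ▸ hdRank_le x
  have hkeyJ : ∀ x, x ∉ D → key x = (n + 1) * (n + 2 - r x) + (e x : ℕ) :=
    fun x hx => by simp [key, hx]
  have hkeyJ_ge : ∀ x, x ∉ D → 2 * (n + 1) ≤ key x := by
    intro x hx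
    rw [hkeyJ x hx]
    have h1 : 2 ≤ n + 2 - r x := by have := hr_le x; omega
    calc 2 * (n + 1) = (n + 1) * 2 := by ring
    _ ≤ (n + 1) * (n + 2 - r x) := Nat.mul_le_mul_left _ h1
    _ ≤ _ := Nat.le_add_right _ _
  have hDlt : ∀ x ∈ D, ∀ y ∉ D, key x < key y := by
    intro x hx y hy
    have := hkeyD_le x hx
    have := hkeyJ_ge y hy
    omega
  have hAmono : ∀ x y, x ∉ D → y ∉ D → key x < key y → r y ≤ r x := by
    intro x y hx hy h
    rw [hkeyJ x hx, hkeyJ y hy] at h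
    have hex : (e x : ℕ) < n + 1 := by have := (e x).isLt; omega
    have hey : (e y : ℕ) < n + 1 := by have := (e y).isLt; omega
    have hA : n + 2 - r x ≤ n + 2 - r y := by
      by_contra hc
      push_neg at hc
      have := nat_key_lt_of_lt (k := n + 1) (a2 := n + 2 - r x) (b2 := (e x : ℕ)) hey hc
      omega
    have := hr_le x
    have := hr_le y
    omega
  have hkey_inj : Function.Injective key := by
    intro x y h
    by_cases hx : x ∈ D <;> by_cases hy : y ∈ D
    · exact hdRank_inj (by rwa [hkeyD x hx, hkeyD y hy] at h)
    · exact absurd h (ne_of_lt (hDlt x hx y hy))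
    · exact absurd h.symm (ne_of_lt (hDlt y hy x hx))
    · rw [hkeyJ x hx, hkeyJ y hy] at h
      have hex : (e x : ℕ) < n + 1 := by have := (e x).isLt; omega
      have hey : (e y : ℕ) < n + 1 := by have := (e y).isLt; omega
      have hA : n + 2 - r x = n + 2 - r y := by
        by_contra hc
        rcases Nat.lt_or_ge (n + 2 - r x) (n + 2 - r y) with h1 | h1
        · exact absurd h (ne_of_lt (nat_key_lt_of_lt hex h1))
        · exact absurd h.symm (ne_of_lt (nat_key_lt_of_lt hey (lt_of_le_of_ne h1 (Ne.symm hc))))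
      rw [hA] at h
      have : (e x : ℕ) = (e y : ℕ) := by omega
      exact e.injective (Fin.val_injective this)
  letI : LinearOrder V := LinearOrder.lift' key hkey_inj
  let σiso : Fin (Fintype.card V) ≃o V := monoEquivOfFin V rfl
  set σ : Fin (Fintype.card V) ≃ V := σiso.toEquiv with hσ
  have hlt : ∀ x y : V, σ.symm x < σ.symm y ↔ key x < key y := by
    intro x y
    exact (OrderIso.lt_iff_lt σiso.symm).trans Iff.rfl
  have hle : ∀ x y : V, σ.symm x ≤ σ.symm y ↔ key x ≤ key y := by
    intro x y
    exact (OrderIso.le_iff_le σiso.symm).trans Iff.rfl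
  have hne0 : ∀ x : V, (σ.symm x).val ≠ 0 ↔ ∃ y, key y < key x := by
    intro x
    constructor
    · intro h
      refine ⟨σ ⟨0, lt_of_le_of_lt (Nat.zero_le _) (σ.symm x).isLt⟩, ?_⟩
      rw [← hlt]
      simp only [Equiv.symm_apply_apply]
      exact Fin.lt_def.mpr (by simpa using Nat.pos_of_ne_zero h)
    · rintro ⟨y, hy⟩ h0
      rw [← hlt] at hy
      have := Fin.lt_def.mp hy
      omega
  refine ⟨σ, ⟨?_, ?_⟩, ?_, ?_⟩
  · -- GS
    intro w hw0
    rw [hne0] at hw0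
    obtain ⟨y, hy⟩ := hw0
    by_cases hwD : w ∈ D
    · have hyD : y ∈ D := by
        by_contra hyn
        exact absurd hy (not_lt.mpr (le_of_lt (hDlt w hwD y hyn)))
      have hyw : y ≠ w := fun h => absurd hy (h ▸ lt_irrefl _)
      exact ⟨y, (hlt y w).mpr hy, hclique hyD hwD hyw⟩
    · obtain ⟨d, hd, hadj⟩ := hJn w hwD
      exact ⟨d, (hlt d w).mpr (hDlt d hd w hwD), hadj⟩
  · -- 4-point
    intro a b c hab hbc hac hnab
    rw [hlt] at hab hbc
    have haD : a ∈ D := by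
      by_contra haD
      have hbD : b ∉ D := fun hbD => absurd hab (not_lt.mpr (le_of_lt (hDlt b hbD a haD)))
      have hcD : c ∉ D := fun hcD => absurd hbc (not_lt.mpr (le_of_lt (hDlt c hcD b hbD)))
      exact hindep a c haD hcD hac
    have hbD : b ∉ D := by
      intro hbD
      have hne : a ≠ b := fun h => absurd hab (h ▸ lt_irrefl _)
      exact hnab (hclique haD hbD hne)
    have hcD : c ∉ D := fun hcD => absurd hbc (not_lt.mpr (le_of_lt (hDlt c hcD b hbD)))
    obtain ⟨d, hdS, hdmax⟩ := Finset.exists_max_image (S b) dRank (hSne b hbD)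
    have hdS' : d ∈ D ∧ G.Adj d b := by simpa [S] using hdS
    have hrb : r b = dRank d := le_antisymm (Finset.sup_le hdmax) (Finset.le_sup hdS)
    have haS : a ∈ S c := by simp [S, haD, hac]
    have h1 : dRank a ≤ r c := Finset.le_sup haS
    have h2 : r c ≤ r b := hAmono b c hbD hcD hbc
    have hda : a ≠ d := fun h => hnab (h ▸ hdS'.2)
    have h3 : dRank a < dRank d :=
      lt_of_le_of_ne (h1.trans (h2.trans hrb.le)) (fun h => hda (hdRank_inj h))
    refine ⟨d, (hlt a d).mpr ?_, (hlt d b).mpr (hDlt d hdS'.1 b hbD), hdS'.2⟩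
    rw [hkeyD a haD, hkeyD d hdS'.1]
    exact h3
  · -- v is not first
    rw [hne0]
    rcases hv with hvJ | ⟨hvD, ⟨d0, hd0D, hd0v⟩, _⟩
    · obtain ⟨d, hd, _⟩ := hJn v hvJ
      exact ⟨d, hDlt d hd v hvJ⟩
    · refine ⟨d0, ?_⟩
      rw [hkeyD d0 hd0D, hkeyD v hvD]
      simp only [dRank, if_neg hd0v, if_pos rfl]
      exact (e d0).isLt
  · -- v is F-parent of nobody
    rintro w ⟨hw0, hadj, hmin⟩
    have hminkey : ∀ x, G.Adj x w → key v ≤ key x := fun x hx => (hle v x).mp (hmin x hx)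
    by_cases hwD : w ∈ D
    · rw [hne0] at hw0
      obtain ⟨y, hy⟩ := hw0
      have hyD : y ∈ D := by
        by_contra hyn
        exact absurd hy (not_lt.mpr (le_of_lt (hDlt w hwD y hyn)))
      have hyw : y ≠ w := fun h => absurd hy (h ▸ lt_irrefl _)
      have h1 : key v ≤ key y := hminkey y (hclique hyD hwD hyw)
      have h2 : key w ≤ n := hkeyD_le w hwD
      rcases hv with hvJ | ⟨hvD, _, _⟩
      · have := hkeyJ_ge v hvJ
        omega
      · have h3 : key v = n := by rw [hkeyD v hvD]; simp [dRank]
        omega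
    · rcases hv with hvJ | ⟨hvD, _, hcond⟩
      · exact hindep v w hvJ hwD hadj
      · obtain ⟨d, hdD, hdne, hdadj⟩ := hcond w hwD hadj
        have h1 : key v ≤ key d := hminkey d hdadj
        rw [hkeyD v hvD, hkeyD d hdD] at h1
        simp only [dRank, if_neg hdne, if_pos rfl] at h1
        exact absurd h1 (not_le.mpr (e d).isLt)

/-- In a connected split graph with at least two vertices, `v` is an
F-branch leaf of some DFS ordering iff `v` is not a cut vertex. -/
theorem stmt19 [Fintype V] (G : SimpleGraph V)
    (hG : G.Connected) (hn : 2 ≤ Fintype.card V)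
    (hsplit : ∃ C I : Set V, Disjoint C I ∧ C ∪ I = Set.univ ∧ G.IsClique C ∧
      ∀ a ∈ I, ∀ b ∈ I, ¬ G.Adj a b)
    (v : V) :
    (∃ σ : Fin (Fintype.card V) ≃ V, IsDFSOrdering G σ ∧ FBranchLeaf G σ v) ↔
      ¬ CutVertex G v := by
  classical
  constructor
  · -- forward: F-branch leaf of a GS ordering is never a cut vertex
    rintro ⟨σ, ⟨hGS, -⟩, hleaf⟩ hcut
    apply hcut
    have hpos : 0 < Fintype.card V := by omega
    set s : Set V := {w : V | w ≠ v} with hs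
    set w0 : V := σ ⟨0, hpos⟩ with hw0
    have hw0v : w0 ∈ s := by
      intro h
      apply hleaf.1
      rw [← h]
      simp [w0]
    have key : ∀ k (w : V), (σ.symm w).val = k → ∀ hwv : w ∈ s,
        (G.induce s).Reachable ⟨w, hwv⟩ ⟨w0, hw0v⟩ := by
      intro k
      induction k using Nat.strong_induction_on with
      | _ k ih =>
        intro w hwk hwv
        by_cases h0 : (σ.symm w).val = 0
        · have hww0 : w = w0 := by
            have : σ.symm w = ⟨0, hpos⟩ := Fin.ext h0
            rw [hw0, ← this, Equiv.apply_symm_apply]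
          cases hww0
          rfl
        · obtain ⟨u, hu, huadj⟩ := hGS w h0
          obtain ⟨p, hpS, hpmin⟩ := Finset.exists_min_image
            (Finset.univ.filter fun x => G.Adj x w) (fun x => σ.symm x)
            ⟨u, by simp [huadj]⟩
          have hpadj : G.Adj p w := by simpa using hpS
          have hFP : FParent G σ p w :=
            ⟨h0, hpadj, fun x hx => hpmin x (by simp [hx])⟩
          have hpv : p ∈ s := fun h => hleaf.2 w (h ▸ hFP)
          have hplt : (σ.symm p).val < k := by
            have h1 := hpmin u (by simp [huadj])
            have h2 := Fin.le_def.mp h1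
            have h3 := Fin.lt_def.mp hu
            omega
          have hadj' : (G.induce s).Adj ⟨w, hwv⟩ ⟨p, hpv⟩ := by
            simp only [comap_adj, Function.Embedding.coe_subtype]
            exact hpadj.symm
          exact hadj'.reachable.trans (ih _ hplt p rfl hpv)
    rw [connected_iff]
    constructor
    · rintro ⟨x, hxv⟩ ⟨y, hyv⟩
      exact (key _ x rfl hxv).trans (key _ y rfl hyv).symm
    · exact ⟨⟨w0, hw0v⟩⟩
  · -- backward
    intro hnc
    obtain ⟨C, I, hdisj, huniv, hclique, hindep⟩ := hsplit
    have hmem : ∀ x : V, x ∉ C → x ∈ I := by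
      intro x hx
      have hx2 : x ∈ C ∪ I := huniv ▸ Set.mem_univ x
      exact hx2.resolve_left hx
    have hexadj : ∀ x : V, ∃ y, G.Adj y x := by
      intro x
      obtain ⟨y, hy⟩ := Fintype.exists_ne_of_one_lt_card hn x
      obtain ⟨z, hz⟩ := reach_exists_adj (hG.preconnected x y) (Ne.symm hy)
      exact ⟨z, hz.symm⟩
    have hindep' : ∀ a b, a ∉ C → b ∉ C → ¬ G.Adj a b :=
      fun a b ha hb => hindep a (hmem a ha) b (hmem b hb)
    have hJn : ∀ u, u ∉ C → ∃ d ∈ C, G.Adj d u := by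
      intro u hu
      obtain ⟨y, hy⟩ := hexadj u
      by_cases hyC : y ∈ C
      · exact ⟨y, hyC, hy⟩
      · exact absurd hy (hindep' y u hyC hu)
    have hconn : (G.induce {w : V | w ≠ v}).Connected := not_not.mp hnc
    have hreach : ∀ a b : V, a ≠ v → b ≠ v → a ≠ b → ∃ z, z ≠ v ∧ G.Adj a z := by
      intro a b hav hbv hab
      have h1 := hconn.preconnected ⟨a, hav⟩ ⟨b, hbv⟩
      obtain ⟨z, hz⟩ := reach_exists_adj h1 (by simp [Subtype.ext_iff, hab])
      refine ⟨z.1, z.2, ?_⟩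
      simpa using hz
    by_cases hvC : v ∈ C
    · by_cases hD2 : ∃ d ∈ C, d ≠ v
      · apply exists_dfs_fbl G C hclique hindep' hJn v
        right
        refine ⟨hvC, hD2, ?_⟩
        intro u hu hadj
        by_contra hcon
        push_neg at hcon
        obtain ⟨d0, hd0C, hd0v⟩ := hD2
        have huv : u ≠ v := fun h => hu (h ▸ hvC)
        have hud0 : u ≠ d0 := fun h => hu (h ▸ hd0C)
        obtain ⟨z, hzv, hzadj⟩ := hreach u d0 huv hd0v hud0
        have hzC : z ∈ C := by
          by_contra hzn
          exact hindep' u z hu hzn hzadj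
        exact hcon z hzC hzv hzadj.symm
      · push_neg at hD2
        have hnotC : ∀ x : V, x ≠ v → x ∉ C := fun x hx hxC => hx (hD2 x hxC)
        have huniq : ∀ x y : V, x ≠ v → y ≠ v → x = y := by
          intro x y hx hy
          by_contra hxy
          obtain ⟨z, hzv, hzadj⟩ := hreach x y hx hy hxy
          exact hindep' x z (hnotC x hx) (hnotC z hzv) hzadj
        obtain ⟨u, hu⟩ := Fintype.exists_ne_of_one_lt_card hn v
        have hadjuv : G.Adj u v := by
          obtain ⟨y, hy⟩ := hexadj v
          have hyv : y ≠ v := G.ne_of_adj hy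
          rwa [huniq y u hyv hu] at hy
        apply exists_dfs_fbl G {u}
        · exact Set.pairwise_singleton u G.Adj
        · intro a b ha hb hab
          rw [Set.mem_singleton_iff] at ha hb
          have hav : a = v := by
            by_contra hav
            exact ha (huniq a u hav hu)
          have hbv : b = v := by
            by_contra hbv
            exact hb (huniq b u hbv hu)
          rw [hav, hbv] at hab
          exact G.irrefl hab
        · intro x hx
          rw [Set.mem_singleton_iff] at hx
          have hxv : x = v := by
            by_contra hxv
            exact hx (huniq x u hxv hu)
          exact ⟨u, rfl, hxv ▸ hadjuv⟩
        · left
          rw [Set.mem_singleton_iff]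
          exact Ne.symm hu
    · exact exists_dfs_fbl G C hclique hindep' hJn v (Or.inl hvC)
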